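/- Let (M,g,J) be a pseudo-Hermitian manifold (J integrable) and f a smooth function. Then the covariant derivative Kähler forms of g and the conformal metric e^{2f}g are related by ∇Ω_{e^{2f}g} = e^{2f}( ∇Ω_g − σ_g(df) ), where σ_g(φ)(x,y;z) := φ(Jx)g(y,z) − φ(Jy)g(x,z) + φ(x)g(Jy,z) − φ(y)g(Jx,z). -/

import Mathlib

open scoped Matrix

/-- The metric as a function of the point: `g_p(x,y) = xᵀ G(p) y`. -/
def gfun {m : ℕ} (G : (Fin m → ℝ) → Matrix (Fin m) (Fin m) ℝ)
    (p x y : Fin m → ℝ) : ℝ := x ⬝ᵥ (G p).mulVec y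

/-- Lowered Christoffel term: `g(∇_z x, w)` for constant (coordinate) vector fields,
given by the Koszul formula `½(∂_z g(x,w) + ∂_x g(z,w) − ∂_w g(z,x))`. -/
noncomputable def Klow {m : ℕ} (G : (Fin m → ℝ) → Matrix (Fin m) (Fin m) ℝ)
    (z x w p : Fin m → ℝ) : ℝ :=
  (1/2) * (fderiv ℝ (fun q => gfun G q x w) p z + fderiv ℝ (fun q => gfun G q z w) p x
    - fderiv ℝ (fun q => gfun G q z x) p w)

/-- `∇Ω(x,y;z)(p) = ∂_z g(x,Jy) − g(∇_z x, Jy) − g(x, J∇_z y)`, for constant vector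
fields; here `g(x, J∇_z y) = −g(Jx, ∇_z y)` by Hermitian invariance. -/
noncomputable def nablaOmegaC {m : ℕ} (G : (Fin m → ℝ) → Matrix (Fin m) (Fin m) ℝ)
    (J : Matrix (Fin m) (Fin m) ℝ) (x y z p : Fin m → ℝ) : ℝ :=
  fderiv ℝ (fun q => gfun G q x (J.mulVec y)) p z
    - Klow G z x (J.mulVec y) p + Klow G z y (J.mulVec x) p

/-- `σ_g(df)(x,y;z) = df(Jx)g(y,z) − df(Jy)g(x,z) + df(x)g(Jy,z) − df(y)g(Jx,z)`. -/
noncomputable def sigmaC {m : ℕ} (G : (Fin m → ℝ) → Matrix (Fin m) (Fin m) ℝ)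
    (J : Matrix (Fin m) (Fin m) ℝ) (f : (Fin m → ℝ) → ℝ) (x y z p : Fin m → ℝ) : ℝ :=
  fderiv ℝ f p (J.mulVec x) * gfun G p y z - fderiv ℝ f p (J.mulVec y) * gfun G p x z
    + fderiv ℝ f p x * gfun G p (J.mulVec y) z - fderiv ℝ f p y * gfun G p (J.mulVec x) z

/-- Conformal change on a pseudo-Hermitian manifold (local coordinates in which the
integrable structure `J` is constant): the covariant derivative Kähler forms of `g` and
`e^{2f}g` are related by `∇Ω_{e^{2f}g} = e^{2f}(∇Ω_g − σ_g(df))`. -/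
theorem stmt_17 {m : ℕ} (G : (Fin m → ℝ) → Matrix (Fin m) (Fin m) ℝ)
    (J : Matrix (Fin m) (Fin m) ℝ) (f : (Fin m → ℝ) → ℝ)
    (hGdiff : ∀ x y, Differentiable ℝ (fun p => gfun G p x y))
    (hf : Differentiable ℝ f)
    (hGsymm : ∀ p x y, gfun G p x y = gfun G p y x)
    (hGnd : ∀ p x, (∀ y, gfun G p x y = 0) → x = 0)
    (hJ2 : J * J = -1)
    (hJG : ∀ p x y, gfun G p (J.mulVec x) (J.mulVec y) = gfun G p x y) :
    ∀ x y z p,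
      nablaOmegaC (fun q => Real.exp (2 * f q) • G q) J x y z p
        = Real.exp (2 * f p) * (nablaOmegaC G J x y z p - sigmaC G J f x y z p) := by
  have hscale : ∀ p x y, gfun (fun q => Real.exp (2 * f q) • G q) p x y
      = Real.exp (2 * f p) * gfun G p x y := by
    intro p x y
    simp [gfun, Matrix.smul_mulVec, dotProduct_smul, smul_eq_mul]
  have hD : ∀ x y z p, fderiv ℝ (fun q => Real.exp (2 * f q) * gfun G q x y) p z
      = Real.exp (2 * f p) * (2 * fderiv ℝ f p z * gfun G p x y
        + fderiv ℝ (fun q => gfun G q x y) p z) := by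
    intro x y z p
    have hf' : HasFDerivAt (fun q => 2 * f q) ((2:ℝ) • fderiv ℝ f p) p :=
      (hf.differentiableAt.hasFDerivAt).const_mul 2
    have he : HasFDerivAt (fun q => Real.exp (2 * f q))
        (Real.exp (2 * f p) • (2:ℝ) • fderiv ℝ f p) p := hf'.exp
    have hg' : HasFDerivAt (fun q => gfun G q x y)
        (fderiv ℝ (fun q => gfun G q x y) p) p :=
      ((hGdiff x y) p).hasFDerivAt
    rw [show (fun q => Real.exp (2 * f q) * gfun G q x y) = (fun q => Real.exp (2 * f q)) * (fun q => gfun G q x y) from rfl, (he.mul hg').fderiv]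
    simp [ContinuousLinearMap.add_apply, ContinuousLinearMap.smul_apply, smul_eq_mul]
    ring
  have hJJ : ∀ v : Fin m → ℝ, J.mulVec (J.mulVec v) = -v := by
    intro v
    rw [Matrix.mulVec_mulVec, hJ2]
    simp [Matrix.neg_mulVec]
  intro x y z p
  have hA : gfun G p y (J.mulVec x) = -gfun G p x (J.mulVec y) := by
    have h1 := hJG p y (J.mulVec x)
    rw [hJJ x] at h1
    have h2 : gfun G p (J.mulVec y) (-x) = -gfun G p (J.mulVec y) x := by
      simp [gfun, Matrix.mulVec_neg]
    rw [h2] at h1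
    rw [← h1, hGsymm p (J.mulVec y) x]
  simp only [nablaOmegaC, Klow, sigmaC, hscale, hD]
  rw [hA, hGsymm p z x, hGsymm p z y, hGsymm p z (J.mulVec x), hGsymm p z (J.mulVec y)]
  ring
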